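/- arXiv:2102.07406 — 3 statements merged into one kernel-verified Lean document; each statement's English description precedes it below -/
import Mathlib

section
/- Let α, δ > 0, let 0 < κ < 1, let θ > 2κ/(1−κ), and let ϱ > 1. For A > 0 define S_i = 2^{(1+δ)·A·(1+θ)^{2i}} and T_i = 2^{α·A·(1+θ)^{2i+1}} for integers i ≥ 1. Then there exists A₀ > 0 such that for every A ≥ A₀ and every integer i ≥ 1, the series ∑_{j=1}^{∞} ϱ^{2j} · S_{i+j}^{−α(1−κ)} converges and ∑_{j=1}^{∞} ϱ^{2j} · S_{i+j}^{−α(1−κ)} ≤ 2 · ϱ^{−i} · T_i^{−(1+δ)}. -/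
set_option maxHeartbeats 1000000 in
private lemma stmt5_key (α δ κ θ L m₁ m₂ A : ℝ) (i j : ℕ)
    (hα : 0 < α) (hδ : 0 < δ) (hκ0 : 0 < κ) (h1κ : 0 < 1 - κ) (hθ0 : 0 < θ)
    (hbase : 1 + κ ≤ (1-κ)*(1+θ))
    (hm₁1 : m₁ ≤ 1) (hm₁2 : m₁ ≤ 2*θ) (hm₁ : 0 < m₁)
    (hm₂1 : m₂ ≤ κ) (hm₂2 : m₂ ≤ 2*θ) (hm₂ : 0 < m₂)
    (hL : 0 < L) (hA0 : 0 < A) (hAm : 3*(L+1) ≤ α*(1+δ)*m₁*m₂*A) (hi : 1 ≤ i) :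
    L * (2*((j:ℝ)+1)) + ((1+δ)*A*(1+θ)^(2*(i+j+1))) * (-(α*(1-κ)))
      ≤ -((i:ℝ)*L) + (α*A*(1+θ)^(2*i+1))*(-(1+δ)) + (-((j:ℝ)+1)) := by
  have h1θ : (1:ℝ) ≤ 1 + θ := by linarith
  have hi' : (1:ℝ) ≤ (i:ℝ) := by exact_mod_cast hi
  have hj' : (0:ℝ) ≤ (j:ℝ) := Nat.cast_nonneg j
  have bi : (1:ℝ) + (2*i:ℕ) * θ ≤ (1+θ)^(2*i) := one_add_mul_le_pow (by linarith) (2*i)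
  have bj : (1:ℝ) + (2*j:ℕ) * θ ≤ (1+θ)^(2*j) := one_add_mul_le_pow (by linarith) (2*j)
  push_cast at bi bj
  have hQ : m₁ * (1+(i:ℝ)) ≤ (1+θ)^(2*i+1) := by
    have h2 : ((1+θ):ℝ)^(2*i) ≤ (1+θ)^(2*i+1) := pow_le_pow_right₀ h1θ (Nat.le_succ _)
    nlinarith [mul_le_mul_of_nonneg_right hm₁2 (by linarith : (0:ℝ) ≤ (i:ℝ))]
  have hD : 1 + m₂ * (1+(j:ℝ)) ≤ (1-κ)*(1+θ)^(2*j+1) := by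
    have hps : ((1+θ):ℝ)^(2*j+1) = (1+θ)*(1+θ)^(2*j) := by rw [pow_succ]; ring
    have hmm : (1+κ)*(1+2*(j:ℝ)*θ) ≤ ((1-κ)*(1+θ))*((1+θ)^(2*j)) := by
      apply mul_le_mul hbase bj (by nlinarith) (by nlinarith)
    have h5 : 1 + m₂ * (1+(j:ℝ)) ≤ (1+κ)*(1+2*(j:ℝ)*θ) := by
      nlinarith [mul_le_mul_of_nonneg_right hm₂2 hj',
        mul_nonneg (mul_nonneg hκ0.le hj') hθ0.le]
    calc 1 + m₂ * (1+(j:ℝ)) ≤ (1+κ)*(1+2*(j:ℝ)*θ) := h5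
      _ ≤ ((1-κ)*(1+θ))*((1+θ)^(2*j)) := hmm
      _ = (1-κ)*(1+θ)^(2*j+1) := by rw [hps]; ring
  have hsplit : ((1+θ):ℝ)^(2*(i+j+1)) = (1+θ)^(2*i+1) * (1+θ)^(2*j+1) := by
    rw [← pow_add]
    congr 1
    omega
  have hQpos : (0:ℝ) < (1+θ)^(2*i+1) := by positivity
  have hDpos : (0:ℝ) < (1-κ)*(1+θ)^(2*j+1) - 1 := by
    have := mul_pos hm₂ (by linarith : (0:ℝ) < 1+(j:ℝ))
    linarith
  have c1 : (α*(1+δ)*A) * (m₁*(1+(i:ℝ))) * (m₂*(1+(j:ℝ)))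
      ≤ (α*(1+δ)*A) * ((1+θ)^(2*i+1)) * ((1-κ)*(1+θ)^(2*j+1) - 1) := by
    have h1 : (m₁*(1+(i:ℝ))) * (m₂*(1+(j:ℝ)))
        ≤ ((1+θ)^(2*i+1)) * ((1-κ)*(1+θ)^(2*j+1) - 1) := by
      apply mul_le_mul hQ (by linarith) (by positivity) (by positivity)
    calc (α*(1+δ)*A) * (m₁*(1+(i:ℝ))) * (m₂*(1+(j:ℝ)))
        = (α*(1+δ)*A) * ((m₁*(1+(i:ℝ))) * (m₂*(1+(j:ℝ)))) := by ring
      _ ≤ (α*(1+δ)*A) * (((1+θ)^(2*i+1)) * ((1-κ)*(1+θ)^(2*j+1) - 1)) :=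
          mul_le_mul_of_nonneg_left h1 (by positivity)
      _ = (α*(1+δ)*A) * ((1+θ)^(2*i+1)) * ((1-κ)*(1+θ)^(2*j+1) - 1) := by ring
  have c2 : (3*(L+1)) * ((1+(i:ℝ))*(1+(j:ℝ)))
      ≤ (α*(1+δ)*A) * (m₁*(1+(i:ℝ))) * (m₂*(1+(j:ℝ))) := by
    have h6 : (α*(1+δ)*A) * (m₁*(1+(i:ℝ))) * (m₂*(1+(j:ℝ)))
        = (α*(1+δ)*m₁*m₂*A) * ((1+(i:ℝ))*(1+(j:ℝ))) := by ring
    rw [h6]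
    exact mul_le_mul_of_nonneg_right hAm (by positivity)
  have c3 : ((i:ℝ)+2*(j:ℝ)+2)*L + ((j:ℝ)+1) ≤ (3*(L+1)) * ((1+(i:ℝ))*(1+(j:ℝ))) := by
    nlinarith [mul_nonneg hL.le hj', mul_nonneg hL.le (by linarith : (0:ℝ) ≤ (i:ℝ)),
      mul_nonneg (mul_nonneg hL.le hj') (by linarith : (0:ℝ) ≤ (i:ℝ)),
      mul_nonneg hj' (by linarith : (0:ℝ) ≤ (i:ℝ))]
  have eq1 : (α*(1+δ)*A) * ((1+θ)^(2*i+1)) * ((1-κ)*(1+θ)^(2*j+1) - 1)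
      = ((1+δ)*A*(1+θ)^(2*(i+j+1)))*(α*(1-κ)) - (α*A*(1+θ)^(2*i+1))*(1+δ) := by
    rw [hsplit]; ring
  linarith

set_option maxHeartbeats 1000000 in
/-- condition (3.4), 'higher scales have little influence over lower scales':
for `S i = 2^((1+δ)A(1+θ)^(2i))` and `T i = 2^(αA(1+θ)^(2i+1))`, there is `A₀ > 0` such
that for all `A ≥ A₀` and all `i ≥ 1`, the series `∑_{j=1}^∞ ρ^(2j) · S_{i+j}^(-α(1-κ))`
converges and is at most `2 · ρ^(-i) · T_i^(-(1+δ))`. -/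
theorem stmt_5 (α δ κ θ ρ : ℝ) (hα : 0 < α) (hδ : 0 < δ)
    (hκ0 : 0 < κ) (hκ1 : κ < 1) (hθ : θ > 2 * κ / (1 - κ)) (hρ : 1 < ρ) :
    ∃ A₀ : ℝ, 0 < A₀ ∧ ∀ A : ℝ, A₀ ≤ A → ∀ i : ℕ, 1 ≤ i →
      Summable (fun j : ℕ =>
        ρ ^ (2 * (j + 1)) *
          ((2 : ℝ) ^ ((1 + δ) * A * (1 + θ) ^ (2 * (i + j + 1)))) ^ (-(α * (1 - κ)))) ∧
      ∑' j : ℕ, ρ ^ (2 * (j + 1)) *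
          ((2 : ℝ) ^ ((1 + δ) * A * (1 + θ) ^ (2 * (i + j + 1)))) ^ (-(α * (1 - κ)))
        ≤ 2 * (ρ ^ i)⁻¹ * ((2 : ℝ) ^ (α * A * (1 + θ) ^ (2 * i + 1))) ^ (-(1 + δ)) := by
  have h1κ : 0 < 1 - κ := by linarith
  have hθ0 : 0 < θ := lt_trans (by positivity) hθ
  have hρ0 : 0 < ρ := lt_trans one_pos hρ
  set L := Real.logb 2 ρ with hLdef
  have hL : 0 < L := Real.logb_pos one_lt_two hρ
  have hρeq : (2:ℝ) ^ L = ρ := Real.rpow_logb two_pos (by norm_num) hρ0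
  set m₁ := min 1 (2*θ) with hm₁def
  set m₂ := min κ (2*θ) with hm₂def
  have hm₁ : 0 < m₁ := lt_min one_pos (by positivity)
  have hm₂ : 0 < m₂ := lt_min hκ0 (by positivity)
  refine ⟨3*(L+1)/(α*(1+δ)*m₁*m₂), by positivity, ?_⟩
  intro A hA i hi
  have hA0 : 0 < A := lt_of_lt_of_le (by positivity) hA
  have hAm : 3*(L+1) ≤ α*(1+δ)*m₁*m₂*A := by
    rw [div_le_iff₀ (by positivity)] at hA; linarith
  have h1θ : (1:ℝ) ≤ 1 + θ := by linarith
  -- key exponent inequality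
  have key : ∀ j : ℕ,
      L * (2*((j:ℝ)+1)) + ((1+δ)*A*(1+θ)^(2*(i+j+1))) * (-(α*(1-κ)))
      ≤ -((i:ℝ)*L) + (α*A*(1+θ)^(2*i+1))*(-(1+δ)) + (-((j:ℝ)+1)) := fun j =>
    stmt5_key α δ κ θ L m₁ m₂ A i j hα hδ hκ0 h1κ hθ0
      (by have := (div_lt_iff₀ h1κ).mp hθ; nlinarith)
      (min_le_left _ _) (min_le_right _ _) hm₁
      (min_le_left _ _) (min_le_right _ _) hm₂ hL hA0 hAm hi
  -- per-term bound
  set C : ℝ := (ρ ^ i)⁻¹ * ((2 : ℝ) ^ (α * A * (1 + θ) ^ (2 * i + 1))) ^ (-(1 + δ)) with hC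
  have hCpos : 0 < C := by
    rw [hC, ← hρeq, ← Real.rpow_natCast ((2:ℝ)^L) i, ← Real.rpow_mul (by norm_num),
      ← Real.rpow_mul (by norm_num)]
    positivity
  have hmain : ∀ j : ℕ, ρ ^ (2 * (j + 1)) *
      ((2 : ℝ) ^ ((1 + δ) * A * (1 + θ) ^ (2 * (i + j + 1)))) ^ (-(α * (1 - κ)))
      ≤ C * (1/2) ^ (j+1) := by
    intro j
    have lhs_eq : ρ ^ (2 * (j + 1)) *
        ((2 : ℝ) ^ ((1 + δ) * A * (1 + θ) ^ (2 * (i + j + 1)))) ^ (-(α * (1 - κ)))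
        = (2:ℝ) ^ (L * (2*((j:ℝ)+1)) + ((1+δ)*A*(1+θ)^(2*(i+j+1))) * (-(α*(1-κ)))) := by
      rw [← hρeq, ← Real.rpow_natCast ((2:ℝ)^L) (2*(j+1)), ← Real.rpow_mul (by norm_num),
        ← Real.rpow_mul (by norm_num), ← Real.rpow_add (by norm_num)]
      push_cast
      ring_nf
    have rhs_eq : C * (1/2:ℝ) ^ (j+1)
        = (2:ℝ) ^ (-((i:ℝ)*L) + (α*A*(1+θ)^(2*i+1))*(-(1+δ)) + (-((j:ℝ)+1))) := by
      rw [hC, ← hρeq, ← Real.rpow_natCast ((2:ℝ)^L) i, ← Real.rpow_mul (by norm_num),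
        ← Real.rpow_neg (by norm_num), ← Real.rpow_mul (by norm_num)]
      have h12 : (1/2:ℝ) ^ (j+1) = (2:ℝ) ^ (-((j:ℝ)+1)) := by
        rw [Real.rpow_neg (by norm_num),
          show ((j:ℝ)+1) = ((j+1:ℕ):ℝ) by push_cast; ring, Real.rpow_natCast,
          one_div, inv_pow]
      rw [h12, ← Real.rpow_add (by norm_num), ← Real.rpow_add (by norm_num)]
      ring_nf
    rw [lhs_eq, rhs_eq]
    exact Real.rpow_le_rpow_of_exponent_le one_le_two (key j)
  have hgeo : Summable (fun j : ℕ => C * (1/2:ℝ) ^ (j+1)) := by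
    have : Summable (fun j : ℕ => (1/2:ℝ) ^ j) :=
      summable_geometric_of_lt_one (by norm_num) (by norm_num)
    simpa [pow_succ, mul_comm, mul_assoc, mul_left_comm] using (this.mul_left (C * (1/2)))
  have hnn : ∀ j : ℕ, 0 ≤ ρ ^ (2 * (j + 1)) *
      ((2 : ℝ) ^ ((1 + δ) * A * (1 + θ) ^ (2 * (i + j + 1)))) ^ (-(α * (1 - κ))) := by
    intro j; positivity
  have hsum : Summable (fun j : ℕ =>
      ρ ^ (2 * (j + 1)) *
        ((2 : ℝ) ^ ((1 + δ) * A * (1 + θ) ^ (2 * (i + j + 1)))) ^ (-(α * (1 - κ)))) :=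
    Summable.of_nonneg_of_le hnn hmain hgeo
  refine ⟨hsum, ?_⟩
  have hts : ∑' j : ℕ, C * (1/2:ℝ) ^ (j+1) = C := by
    have h1 : (fun j : ℕ => C * (1/2:ℝ) ^ (j+1)) = fun j : ℕ => (C * (1/2)) * (1/2:ℝ) ^ j := by
      funext j; rw [pow_succ]; ring
    rw [h1, tsum_mul_left, tsum_geometric_of_lt_one (by norm_num) (by norm_num)]
    norm_num
    ring
  calc ∑' j : ℕ, ρ ^ (2 * (j + 1)) *
        ((2 : ℝ) ^ ((1 + δ) * A * (1 + θ) ^ (2 * (i + j + 1)))) ^ (-(α * (1 - κ)))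
      ≤ ∑' j : ℕ, C * (1/2:ℝ) ^ (j+1) := Summable.tsum_le_tsum hmain hsum hgeo
    _ = C := hts
    _ ≤ 2 * C := by linarith
    _ = 2 * (ρ ^ i)⁻¹ * ((2 : ℝ) ^ (α * A * (1 + θ) ^ (2 * i + 1))) ^ (-(1 + δ)) := by
        rw [hC]; ring
end

section
/- Let n and k be natural numbers with 2k ≤ n, and let p be a real number with 0 < p ≤ 1/2. Then ∑_{j=0}^{k} C(n, j) · (1−p)^j · p^{n−j} ≤ exp(n·(1/2 − p)) · (2p)^{n/4}. In particular, a Binomial(n, 1−p) random variable Y satisfies ℙ(Y ≤ k) ≤ exp(n(1/2 − p)) · (2p)^{n/4}. -/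
open Finset Real

/-- quantitative lower-tail Chernoff bound for Binomial(n, 1-p)
(end of Step 2 in the proof of Proposition 4.1): for `2k ≤ n` and `0 < p ≤ 1/2`,
`∑_{j=0}^k C(n,j) (1-p)^j p^(n-j) ≤ exp(n(1/2-p)) · (2p)^(n/4)`. -/
theorem stmt_8 (n k : ℕ) (hnk : 2 * k ≤ n) (p : ℝ) (hp0 : 0 < p) (hp1 : p ≤ 1 / 2) :
    ∑ j ∈ Finset.range (k + 1), (Nat.choose n j : ℝ) * (1 - p) ^ j * p ^ (n - j)
      ≤ Real.exp (n * (1 / 2 - p)) * (2 * p) ^ ((n : ℝ) / 4) := by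
  have hkn : k ≤ n := by omega
  set q := Real.sqrt (2 * p) with hqdef
  have h2p0 : (0:ℝ) < 2 * p := by linarith
  have h2p1 : 2 * p ≤ 1 := by linarith
  have hq0 : 0 < q := Real.sqrt_pos.2 h2p0
  have hqsq : q ^ 2 = 2 * p := Real.sq_sqrt h2p0.le
  have hq1 : q ≤ 1 := by
    rw [hqdef, show (1:ℝ) = Real.sqrt 1 by simp]
    exact Real.sqrt_le_sqrt h2p1
  have hpq : 2 * p ≤ q := by nlinarith
  have h1mp : (0:ℝ) ≤ 1 - p := by linarith
  -- Step A: term-by-term bound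
  have stepA : ∀ j ∈ Finset.range (k + 1),
      (Nat.choose n j : ℝ) * (1 - p) ^ j * p ^ (n - j)
        ≤ (q ^ k)⁻¹ * (((1 - p) * q) ^ j * p ^ (n - j) * (Nat.choose n j : ℝ)) := by
    intro j hj
    have hjk : j ≤ k := Nat.lt_succ_iff.mp (Finset.mem_range.mp hj)
    have hterm : (0:ℝ) ≤ (Nat.choose n j : ℝ) * (1 - p) ^ j * p ^ (n - j) := by positivity
    have hqq : q ^ k ≤ q ^ j := pow_le_pow_of_le_one hq0.le hq1 hjk
    rw [inv_mul_eq_div, le_div_iff₀ (pow_pos hq0 k), mul_pow]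
    calc (Nat.choose n j : ℝ) * (1 - p) ^ j * p ^ (n - j) * q ^ k
        ≤ (Nat.choose n j : ℝ) * (1 - p) ^ j * p ^ (n - j) * q ^ j :=
          mul_le_mul_of_nonneg_left hqq hterm
      _ = (1 - p) ^ j * q ^ j * p ^ (n - j) * (Nat.choose n j : ℝ) := by ring
  have hbin : ∑ j ∈ Finset.range (n + 1),
      ((1 - p) * q) ^ j * p ^ (n - j) * (Nat.choose n j : ℝ) = ((1 - p) * q + p) ^ n :=
    (add_pow ((1 - p) * q) p n).symm
  have stepB : ∑ j ∈ Finset.range (k + 1),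
      ((1 - p) * q) ^ j * p ^ (n - j) * (Nat.choose n j : ℝ) ≤ ((1 - p) * q + p) ^ n := by
    rw [← hbin]
    apply Finset.sum_le_sum_of_subset_of_nonneg
    · exact Finset.range_subset_range.2 (by omega)
    · intro j _ _
      positivity
  -- base inequality
  have hexp : (1:ℝ) + (1 / 2 - p) ≤ Real.exp (1 / 2 - p) := by
    have := Real.add_one_le_exp (1 / 2 - p); linarith
  have hbase : (1 - p) * q + p ≤ Real.exp (1 / 2 - p) * q := by
    nlinarith [mul_nonneg (show (0:ℝ) ≤ Real.exp (1/2 - p) - (3/2 - p) by linarith) hq0.le]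
  have hbase0 : (0:ℝ) ≤ (1 - p) * q + p := by positivity
  have stepC : ((1 - p) * q + p) ^ n ≤ Real.exp (n * (1 / 2 - p)) * q ^ n := by
    calc ((1 - p) * q + p) ^ n ≤ (Real.exp (1 / 2 - p) * q) ^ n :=
          pow_le_pow_left₀ hbase0 hbase n
      _ = Real.exp (n * (1 / 2 - p)) * q ^ n := by
          rw [mul_pow, ← Real.exp_nat_mul]
  -- final rpow comparison
  have hfinal : (q ^ k)⁻¹ * (Real.exp (n * (1 / 2 - p)) * q ^ n)
      ≤ Real.exp (n * (1 / 2 - p)) * (2 * p) ^ ((n : ℝ) / 4) := by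
    have hqnk : (q ^ k)⁻¹ * q ^ n = q ^ (n - k) := by
      rw [pow_sub₀ q hq0.ne' hkn]; ring
    have h1 : q ^ (n - k) = q ^ (((n - k : ℕ) : ℝ)) := (Real.rpow_natCast q (n - k)).symm
    have h2 : (2 * p) ^ ((n : ℝ) / 4) = q ^ ((n : ℝ) / 2) := by
      rw [← hqsq, ← Real.rpow_natCast q 2, ← Real.rpow_mul hq0.le]
      congr 1; ring
    have h3 : (n : ℝ) / 2 ≤ ((n - k : ℕ) : ℝ) := by
      rw [Nat.cast_sub hkn]
      have : (2 * k : ℝ) ≤ n := by exact_mod_cast hnk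
      linarith
    have h4 : q ^ (((n - k : ℕ) : ℝ)) ≤ q ^ ((n : ℝ) / 2) :=
      Real.rpow_le_rpow_of_exponent_ge hq0 hq1 h3
    calc (q ^ k)⁻¹ * (Real.exp (n * (1 / 2 - p)) * q ^ n)
        = Real.exp (n * (1 / 2 - p)) * ((q ^ k)⁻¹ * q ^ n) := by ring
      _ = Real.exp (n * (1 / 2 - p)) * q ^ (((n - k : ℕ) : ℝ)) := by rw [hqnk, h1]
      _ ≤ Real.exp (n * (1 / 2 - p)) * q ^ ((n : ℝ) / 2) := by
          exact mul_le_mul_of_nonneg_left h4 (Real.exp_nonneg _)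
      _ = Real.exp (n * (1 / 2 - p)) * (2 * p) ^ ((n : ℝ) / 4) := by rw [h2]
  calc ∑ j ∈ Finset.range (k + 1), (Nat.choose n j : ℝ) * (1 - p) ^ j * p ^ (n - j)
      ≤ ∑ j ∈ Finset.range (k + 1),
          (q ^ k)⁻¹ * (((1 - p) * q) ^ j * p ^ (n - j) * (Nat.choose n j : ℝ)) :=
        Finset.sum_le_sum stepA
    _ = (q ^ k)⁻¹ * ∑ j ∈ Finset.range (k + 1),
          ((1 - p) * q) ^ j * p ^ (n - j) * (Nat.choose n j : ℝ) := by
        rw [Finset.mul_sum]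
    _ ≤ (q ^ k)⁻¹ * ((1 - p) * q + p) ^ n :=
        mul_le_mul_of_nonneg_left stepB (by positivity)
    _ ≤ (q ^ k)⁻¹ * (Real.exp (n * (1 / 2 - p)) * q ^ n) :=
        mul_le_mul_of_nonneg_left stepC (by positivity)
    _ ≤ Real.exp (n * (1 / 2 - p)) * (2 * p) ^ ((n : ℝ) / 4) := hfinal
end

section
/- Let (X_i)_{i∈F} be a nonempty finite family of nonnegative random variables on a probability space (Ω, ℱ, ℙ), let c ≥ 0 be such that E[e^{X_i}] ≤ e^c for every i ∈ F, and let g be a real number with 0 < g < 1. Then E[exp(g · max_{i∈F} X_i)] ≤ |F|^g · e^{gc} / (1 − g), where |F| is the cardinality of F. -/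
open MeasureTheory

/-- exponential moment of the maximum of a finite family (Lemma 5.4,
estimate (5.21)): if `E[e^(X i)] ≤ e^c` for every `i` in a nonempty finite family and
`0 < g < 1`, then `E[exp(g · max_i X i)] ≤ |F|^g · e^(gc)/(1-g)`. -/
theorem stmt_11 {Ω : Type*} [MeasurableSpace Ω] (P : Measure Ω) [IsProbabilityMeasure P]
    {F : Type*} [Fintype F] [Nonempty F] (X : F → Ω → ℝ)
    (hmeas : ∀ i, Measurable (X i)) (hnonneg : ∀ i ω, 0 ≤ X i ω)
    (c : ℝ) (hc : 0 ≤ c)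
    (hint : ∀ i, Integrable (fun ω => Real.exp (X i ω)) P)
    (hbound : ∀ i, ∫ ω, Real.exp (X i ω) ∂P ≤ Real.exp c)
    (g : ℝ) (hg0 : 0 < g) (hg1 : g < 1) :
    ∫ ω, Real.exp (g * ⨆ i, X i ω) ∂P
      ≤ (Fintype.card F : ℝ) ^ g * Real.exp (g * c) / (1 - g) := by
  set Y : Ω → ℝ := fun ω => ∑ i, Real.exp (X i ω) with hY
  have hYint : Integrable Y P := integrable_finset_sum _ fun i _ => hint i
  have hYnn : ∀ ω, 0 ≤ Y ω := fun ω =>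
    Finset.sum_nonneg fun i _ => (Real.exp_pos _).le
  -- pointwise bound: exp (g * sup) ≤ Y^g
  have hpt : ∀ ω, Real.exp (g * ⨆ i, X i ω) ≤ Y ω ^ g := by
    intro ω
    have hsup : Real.exp (⨆ i, X i ω) ≤ Y ω := by
      obtain ⟨i₀, hi₀⟩ := Finite.exists_max (fun i => X i ω)
      have h1 : (⨆ i, X i ω) = X i₀ ω :=
        le_antisymm (ciSup_le fun i => hi₀ i) (le_ciSup (f := fun i => X i ω) (Finite.bddAbove_range _) i₀)
      rw [h1]
      exact Finset.single_le_sum (f := fun i => Real.exp (X i ω))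
        (fun i _ => (Real.exp_pos _).le) (Finset.mem_univ i₀)
    calc Real.exp (g * ⨆ i, X i ω) = Real.exp (⨆ i, X i ω) ^ g := by
          rw [mul_comm, Real.exp_mul]
      _ ≤ Y ω ^ g := Real.rpow_le_rpow (Real.exp_pos _).le hsup hg0.le
  -- integrability of Y^g
  have hYg_int : Integrable (fun ω => Y ω ^ g) P := by
    have hmY : Measurable Y := by
      apply Finset.measurable_sum
      exact fun i _ => (hmeas i).exp
    refine Integrable.mono' (hYint.add (integrable_const 1)) (((Real.continuous_rpow_const hg0.le).measurable.comp hmY).aestronglyMeasurable)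
      (Filter.Eventually.of_forall fun ω => ?_)
    rw [Real.norm_of_nonneg (Real.rpow_nonneg (hYnn ω) g)]
    rcases le_total (Y ω) 1 with h | h
    · calc Y ω ^ g ≤ 1 ^ g := Real.rpow_le_rpow (hYnn ω) h hg0.le
        _ = 1 := Real.one_rpow g
        _ ≤ Y ω + 1 := by linarith [hYnn ω]
    · calc Y ω ^ g ≤ Y ω ^ (1 : ℝ) :=
          Real.rpow_le_rpow_of_exponent_le h hg1.le
        _ = Y ω := Real.rpow_one _
        _ ≤ Y ω + 1 := by linarith
  -- Jensen
  have hjensen : ∫ ω, Y ω ^ g ∂P ≤ (∫ ω, Y ω ∂P) ^ g := by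
    exact ConcaveOn.le_map_integral (Real.concaveOn_rpow hg0.le hg1.le)
      ((Real.continuous_rpow_const hg0.le).continuousOn)
      isClosed_Ici (Filter.Eventually.of_forall fun ω => hYnn ω) hYint hYg_int
  have hYbound : ∫ ω, Y ω ∂P ≤ (Fintype.card F : ℝ) * Real.exp c := by
    rw [hY, integral_finset_sum _ fun i _ => hint i]
    calc (∑ i, ∫ ω, Real.exp (X i ω) ∂P) ≤ ∑ _i : F, Real.exp c :=
          Finset.sum_le_sum fun i _ => hbound i
      _ = (Fintype.card F : ℝ) * Real.exp c := by
          simp [Finset.sum_const, mul_comm]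
  have hcard : (0:ℝ) < (Fintype.card F : ℝ) := by
    exact_mod_cast Fintype.card_pos
  have hmain : ∫ ω, Real.exp (g * ⨆ i, X i ω) ∂P
      ≤ (Fintype.card F : ℝ) ^ g * Real.exp (g * c) := by
    calc ∫ ω, Real.exp (g * ⨆ i, X i ω) ∂P ≤ ∫ ω, Y ω ^ g ∂P :=
          integral_mono_of_nonneg
            (Filter.Eventually.of_forall fun ω => (Real.exp_pos _).le) hYg_int
            (Filter.Eventually.of_forall hpt)
      _ ≤ (∫ ω, Y ω ∂P) ^ g := hjensen
      _ ≤ ((Fintype.card F : ℝ) * Real.exp c) ^ g := by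
          apply Real.rpow_le_rpow (integral_nonneg fun ω => hYnn ω) hYbound hg0.le
      _ = (Fintype.card F : ℝ) ^ g * Real.exp (g * c) := by
          rw [Real.mul_rpow hcard.le (Real.exp_pos _).le, ← Real.exp_mul, mul_comm c g]
  have h1g : 0 < 1 - g := by linarith
  have hnum : 0 ≤ (Fintype.card F : ℝ) ^ g * Real.exp (g * c) := by positivity
  calc ∫ ω, Real.exp (g * ⨆ i, X i ω) ∂P ≤ (Fintype.card F : ℝ) ^ g * Real.exp (g * c) := hmain
    _ ≤ (Fintype.card F : ℝ) ^ g * Real.exp (g * c) / (1 - g) := by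
        rw [le_div_iff₀ h1g]
        nlinarith
end
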